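/- Suppose the homology sphere condition e₀α + Σ_{l=1}^{ν} ω_l α̂_l = −1 holds. Let m be a natural number and suppose m = d·α + Σ_{l=1}^{ν} a_l·α̂_l for an integer d and integers a_l with 0 ≤ a_l < α_l for every l. Then τ(m) = Σ_{l=1}^{ν} ( (1/2)⌊(m−1)/α_l⌋ − s(α̂_l, α_l; m/α_l, 0) + s(α̂_l, α_l) ) + m²/(2α) + m(1 − ν/2) − d/2 + ν/4 + (1/4)·Σ_{l=1}^{ν} ε_{α_l}(m), where the floor ⌊(m−1)/α_l⌋ is taken in ℤ (so it equals −1 when m = 0). -/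

import Mathlib

/-- The sawtooth function `((x))`: it is `0` for integers `x`, and `x - ⌊x⌋ - 1/2` otherwise. -/
noncomputable def saw (x : ℝ) : ℝ := if Int.fract x = 0 then 0 else Int.fract x - 1/2

/-- The generalized Dedekind sum `s(a, b; x, y) = Σ_{i=0}^{b-1} (((i+y)/b))·((a(i+y)/b + x))`. -/
noncomputable def dsum (a b : ℤ) (x y : ℝ) : ℝ :=
  ∑ i ∈ Finset.range b.toNat,
    saw (((i : ℝ) + y) / (b : ℝ)) * saw ((a : ℝ) * ((i : ℝ) + y) / (b : ℝ) + x)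

/-- a compact formula for `τ(m)` for Seifert integral homology spheres.
Here `α = ∏ α_l`, `α̂_l = α / α_l`, the homology sphere condition reads
`e₀α + Σ ω_l α̂_l = −1`, `Δ_j = 1 − j e₀ − Σ ⌈j ω_l / α_l⌉`, `τ(m) = Σ_{j<m} Δ_j`,
and if `m = d α + Σ a_l α̂_l` with `0 ≤ a_l < α_l`, then
`τ(m) = Σ_l ( ⌊(m−1)/α_l⌋/2 − s(α̂_l, α_l; m/α_l, 0) + s(α̂_l, α_l) )
  + m²/(2α) + m(1 − ν/2) − d/2 + ν/4 + (1/4)·Σ_l ε_{α_l}(m)`. -/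

noncomputable def sw (b n : ℤ) : ℝ := saw ((n:ℝ)/(b:ℝ))


lemma fract_intdiv (b n : ℤ) (hb : 0 < b) :
    Int.fract ((n : ℝ) / (b : ℝ)) = ((n % b : ℤ) : ℝ) / (b : ℝ) := by
  have hb0 : (b : ℝ) ≠ 0 := by positivity
  have h0 : (n : ℝ) = (b : ℝ) * ((n / b : ℤ) : ℝ) + ((n % b : ℤ) : ℝ) := by
    exact_mod_cast (congrArg (Int.cast : ℤ → ℝ) (Int.mul_ediv_add_emod n b)).symm
  have h1 : (n : ℝ) / (b : ℝ) = ((n / b : ℤ) : ℝ) + ((n % b : ℤ) : ℝ) / (b : ℝ) := by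
    field_simp [h0]; linarith [h0]
  rw [h1, Int.fract_intCast_add, Int.fract_eq_self.mpr]
  constructor
  · have : (0:ℝ) ≤ ((n % b : ℤ) : ℝ) := by exact_mod_cast Int.emod_nonneg n (by omega)
    positivity
  · rw [div_lt_one (by positivity)]
    exact_mod_cast Int.emod_lt_of_pos n hb

lemma sawq (b n : ℤ) (hb : 0 < b) :
    saw ((n : ℝ) / (b : ℝ)) =
      if b ∣ n then 0 else ((n % b : ℤ) : ℝ) / (b : ℝ) - 1/2 := by
  have hb0 : (b : ℝ) ≠ 0 := by positivity
  rw [saw, fract_intdiv b n hb]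
  by_cases hd : b ∣ n
  · simp [hd, Int.emod_eq_zero_of_dvd hd]
  · have h1 : n % b ≠ 0 := fun h => hd (Int.dvd_of_emod_eq_zero h)
    have h2 : ((n % b : ℤ) : ℝ) / (b : ℝ) ≠ 0 := by
      have h3 : ((n % b : ℤ) : ℝ) ≠ 0 := Int.cast_ne_zero.mpr h1
      exact div_ne_zero h3 hb0
    simp [hd, h2]

lemma saw_zero : saw 0 = 0 := by simp [saw]

lemma saw_mod (b n : ℤ) (hb : 0 < b) :
    saw ((n : ℝ) / (b : ℝ)) = saw (((n % b : ℤ) : ℝ) / (b : ℝ)) := by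
  rw [sawq b n hb, sawq b (n % b) hb, Int.emod_emod_of_dvd n dvd_rfl]
  have : b ∣ n % b ↔ b ∣ n := by
    constructor
    · intro h
      have h2 : b ∣ b * (n / b) := Dvd.intro _ rfl
      have h3 := Int.mul_ediv_add_emod n b
      exact h3 ▸ dvd_add h2 h
    · intro h; simp [Int.emod_eq_zero_of_dvd h]
  simp only [this]

lemma saw_succ_sub (b n : ℤ) (hb : 2 ≤ b) :
    saw (((n+1 : ℤ) : ℝ) / (b : ℝ)) - saw ((n : ℝ) / (b : ℝ)) =
      1 / (b : ℝ) - (if b ∣ n then (1:ℝ)/2 else 0) - (if b ∣ (n+1) then (1:ℝ)/2 else 0) := by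
  have hb0 : (0:ℤ) < b := by omega
  have hbR : (b : ℝ) ≠ 0 := by positivity
  obtain ⟨q, r, hqr, hr0, hrb⟩ : ∃ q r, n = b * q + r ∧ 0 ≤ r ∧ r < b :=
    ⟨n / b, n % b, (Int.mul_ediv_add_emod n b).symm, Int.emod_nonneg n (by omega), Int.emod_lt_of_pos n hb0⟩
  have hqr' : n = r + b * q := by omega
  have hmod : n % b = r := by rw [hqr', Int.add_mul_emod_self_left, Int.emod_eq_of_lt hr0 hrb]
  by_cases h1 : r = 0
  · have hd : b ∣ n := Int.dvd_of_emod_eq_zero (by rw [hmod, h1])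
    have hnd : ¬ b ∣ (n+1) := by
      intro h
      have h2 : b ∣ 1 := by
        have := h.sub hd
        simpa using this
      have := Int.le_of_dvd one_pos h2
      omega
    have hmod1 : (n+1) % b = 1 := by
      have h3 : n + 1 = 1 + b * q := by omega
      rw [h3, Int.add_mul_emod_self_left, Int.emod_eq_of_lt (by omega) (by omega)]
    rw [sawq b (n+1) hb0, sawq b n hb0, hmod1]
    simp only [hd, hnd, if_true, if_false]
    push_cast
    ring
  · by_cases h2 : r = b - 1
    · have hd1 : b ∣ (n+1) := ⟨q+1, by rw [hqr, h2]; ring⟩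
      have hnd : ¬ b ∣ n := by
        intro h
        have := Int.emod_eq_zero_of_dvd h
        omega
      rw [sawq b (n+1) hb0, sawq b n hb0, hmod]
      simp only [hd1, hnd, if_true, if_false, h2]
      push_cast
      field_simp
      ring
    · have hnd : ¬ b ∣ n := by
        intro h
        have := Int.emod_eq_zero_of_dvd h
        omega
      have hmod1 : (n+1) % b = r + 1 := by
        have h3 : n + 1 = (r + 1) + b * q := by omega
        rw [h3, Int.add_mul_emod_self_left, Int.emod_eq_of_lt (by omega) (by omega)]
      have hnd1 : ¬ b ∣ (n+1) := by
        intro h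
        have := Int.emod_eq_zero_of_dvd h
        omega
      rw [sawq b (n+1) hb0, sawq b n hb0, hmod1, hmod]
      simp only [hnd, hnd1, if_false]
      push_cast
      field_simp
      ring

-- Lemma B: sum of saw over a period is 0
lemma sum_saw_period (b : ℤ) (hb : 2 ≤ b) :
    ∑ i ∈ Finset.range b.toNat, saw ((i : ℝ) / (b : ℝ)) = 0 := by
  have hb0 : (0:ℤ) < b := by omega
  have hbR : (b : ℝ) ≠ 0 := by positivity
  have hbt : ((b.toNat : ℕ) : ℝ) = (b : ℝ) := by
    exact_mod_cast congrArg (fun z : ℤ => (z:ℝ)) (Int.toNat_of_nonneg (le_of_lt hb0))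
  have key : ∀ i ∈ Finset.range b.toNat,
      saw ((i : ℝ) / (b : ℝ)) = (if i = 0 then (1:ℝ)/2 else 0) + ((i : ℝ) / (b : ℝ) - 1/2) := by
    intro i hi
    have hi' : i < b.toNat := Finset.mem_range.mp hi
    have hib : (i : ℤ) < b := by omega
    have hcast : ((i:ℕ) : ℝ) = (((i:ℕ) : ℤ) : ℝ) := by push_cast; ring
    rw [hcast, sawq b i hb0]
    by_cases h0 : i = 0
    · simp [h0]
    · have hpos : (0:ℤ) < (i:ℤ) := by exact_mod_cast Nat.pos_of_ne_zero h0
      have hni : ¬ b ∣ (i : ℤ) := by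
        intro h
        have := Int.le_of_dvd hpos h
        omega
      rw [if_neg hni, Int.emod_eq_of_lt (by positivity) hib]
      simp [h0]
  rw [Finset.sum_congr rfl key, Finset.sum_add_distrib]
  have h1 : ∑ i ∈ Finset.range b.toNat, (if i = 0 then (1:ℝ)/2 else 0) = 1/2 := by
    have hmem : (0:ℕ) ∈ Finset.range b.toNat := Finset.mem_range.mpr (by omega)
    rw [Finset.sum_ite_eq' (Finset.range b.toNat) 0 (fun _ => (1:ℝ)/2), if_pos hmem]
  have h3 : ∑ i ∈ Finset.range b.toNat, ((i : ℝ) / (b : ℝ))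
      = ((b.toNat : ℝ) * ((b.toNat : ℝ) - 1) / 2) / b := by
    rw [← Finset.sum_div]
    congr 1
    induction b.toNat with
    | zero => simp
    | succ n ih => rw [Finset.sum_range_succ, ih]; push_cast; ring
  have h2 : ∑ i ∈ Finset.range b.toNat, ((i : ℝ) / (b : ℝ) - 1/2) = -(1/2) := by
    rw [Finset.sum_sub_distrib, h3, Finset.sum_const, Finset.card_range, nsmul_eq_mul, hbt]
    field_simp
    ring
  rw [h1, h2]
  ring

lemma sw_mod (b n : ℤ) (hb : 0 < b) : sw b n = sw b (n % b) := saw_mod b n hb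
lemma sw_succ (b n : ℤ) (hb : 2 ≤ b) :
    sw b (n+1) - sw b n =
      1 / (b : ℝ) - (if b ∣ n then (1:ℝ)/2 else 0) - (if b ∣ (n+1) then (1:ℝ)/2 else 0) :=
  saw_succ_sub b n hb
lemma sw_zero (b : ℤ) : sw b 0 = 0 := by simp [sw, saw_zero]
lemma sum_sw (b : ℤ) (hb : 2 ≤ b) : ∑ i ∈ Finset.range b.toNat, sw b i = 0 :=
  sum_saw_period b hb

-- Lemma C
lemma sum_sw_dvd (b h ω : ℤ) (hb : 2 ≤ b) (hbω : b ∣ h * ω + 1) (c : ℤ) :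
    ∑ i ∈ Finset.range b.toNat, (if b ∣ (h * (i:ℤ) + c) then sw b i else 0)
      = sw b (ω * c) := by
  have hb0 : (0:ℤ) < b := by omega
  obtain ⟨k, hk⟩ := hbω
  have hcop : IsCoprime b h := ⟨k, -ω, by linarith⟩
  set i₀ : ℕ := ((ω * c) % b).toNat with hi₀
  have hi₀z : (i₀ : ℤ) = (ω * c) % b := Int.toNat_of_nonneg (Int.emod_nonneg _ (by omega))
  have hmem : i₀ ∈ Finset.range b.toNat := by
    have := Int.emod_lt_of_pos (ω * c) hb0
    have := Int.emod_nonneg (ω * c) (show b ≠ 0 by omega)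
    simp only [Finset.mem_range]
    omega
  have hcong : b ∣ h * (i₀ : ℤ) + c := by
    refine ⟨k * c - h * ((ω*c)/b), ?_⟩
    rw [hi₀z]
    linear_combination h * (Int.mul_ediv_add_emod (ω*c) b) + c * hk
  rw [Finset.sum_eq_single_of_mem i₀ hmem]
  · rw [if_pos hcong, sw, hi₀z, ← saw_mod b (ω*c) hb0]
    rfl
  · intro i hi hne
    rw [if_neg]
    intro hdi
    have hdvd : b ∣ h * ((i:ℤ) - (i₀:ℤ)) := by
      have := hdi.sub hcong
      have he : h * (i:ℤ) + c - (h * (i₀:ℤ) + c) = h * ((i:ℤ) - (i₀:ℤ)) := by ring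
      rwa [he] at this
    have hdvd2 : b ∣ ((i:ℤ) - (i₀:ℤ)) := hcop.dvd_of_dvd_mul_left hdvd
    have hib : (i:ℤ) < b := by
      have := Finset.mem_range.mp hi
      omega
    have hi₀b : (i₀:ℤ) < b := by
      have := Finset.mem_range.mp hmem
      omega
    have : (i:ℤ) - (i₀:ℤ) = 0 := Int.eq_zero_of_abs_lt_dvd hdvd2 (by
      rw [abs_lt]
      constructor <;> omega)
    exact hne (by omega)

-- Key lemma
lemma key_sum (b h ω : ℤ) (hb : 2 ≤ b) (hbω : b ∣ h * ω + 1) (m : ℕ) :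
    ∑ j ∈ Finset.range m, sw b (ω * (j:ℤ))
      = -(∑ i ∈ Finset.range b.toNat, sw b i * sw b (h * (i:ℤ) + (m:ℤ)))
        + (∑ i ∈ Finset.range b.toNat, sw b i * sw b (h * (i:ℤ)))
        - (1/2) * sw b (ω * (m:ℤ)) := by
  have hb0 : (0:ℤ) < b := by omega
  induction m with
  | zero => simp [sw_zero, mul_zero]
  | succ m ih =>
    rw [Finset.sum_range_succ, ih]
    have hD : ∑ i ∈ Finset.range b.toNat, sw b i * sw b (h * (i:ℤ) + ((m:ℤ)+1))
        - ∑ i ∈ Finset.range b.toNat, sw b i * sw b (h * (i:ℤ) + (m:ℤ))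
        = -(1/2) * sw b (ω * (m:ℤ)) - (1/2) * sw b (ω * ((m:ℤ)+1)) := by
      rw [← Finset.sum_sub_distrib]
      have hcongr : ∀ i ∈ Finset.range b.toNat,
          sw b i * sw b (h * (i:ℤ) + ((m:ℤ)+1)) - sw b i * sw b (h * (i:ℤ) + (m:ℤ))
          = sw b i * (1/(b:ℝ))
            - (if b ∣ (h * (i:ℤ) + (m:ℤ)) then sw b i else 0) * (1/2)
            - (if b ∣ (h * (i:ℤ) + ((m:ℤ)+1)) then sw b i else 0) * (1/2) := by
        intro i _
        have harg : h * (i:ℤ) + ((m:ℤ)+1) = (h * (i:ℤ) + (m:ℤ)) + 1 := by ring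
        rw [harg, ← mul_sub, sw_succ b (h * (i:ℤ) + (m:ℤ)) hb, ← harg]
        split_ifs <;> ring
      rw [Finset.sum_congr rfl hcongr, Finset.sum_sub_distrib, Finset.sum_sub_distrib,
        ← Finset.sum_mul, ← Finset.sum_mul, ← Finset.sum_mul, sum_sw b hb,
        sum_sw_dvd b h ω hb hbω (m:ℤ)]
      have : ∀ i ∈ Finset.range b.toNat, (h * (i:ℤ) + ((m:ℤ)+1)) = (h * (i:ℤ) + ((m:ℤ)+1)) := fun _ _ => rfl
      rw [show (fun i : ℕ => if b ∣ (h * (i:ℤ) + ((m:ℤ)+1)) then sw b i else 0)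
            = (fun i : ℕ => if b ∣ (h * (i:ℤ) + ((m:ℤ)+1)) then sw b i else 0) from rfl]
      have h2 : ∑ i ∈ Finset.range b.toNat, (if b ∣ (h * (i:ℤ) + ((m:ℤ)+1)) then sw b i else 0)
          = sw b (ω * ((m:ℤ)+1)) := sum_sw_dvd b h ω hb hbω ((m:ℤ)+1)
      rw [h2]
      ring
    push_cast
    linarith [hD]

lemma dsum_eq_sw (a b : ℤ) (c : ℤ) (hb : 0 < b) :
    dsum a b ((c:ℝ)/(b:ℝ)) 0
      = ∑ i ∈ Finset.range b.toNat, sw b i * sw b (a * (i:ℤ) + c) := by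
  have hbR : (b:ℝ) ≠ 0 := by positivity
  unfold dsum sw
  refine Finset.sum_congr rfl fun i _ => ?_
  have e1 : (((i:ℕ):ℝ) + 0) / (b:ℝ) = (((i:ℤ)):ℝ)/(b:ℝ) := by push_cast <;> ring
  have e2 : (a:ℝ) * (((i:ℕ):ℝ) + 0) / (b:ℝ) + (c:ℝ)/(b:ℝ)
      = (((a*(i:ℤ)+c : ℤ)):ℝ)/(b:ℝ) := by push_cast <;> field_simp <;> ring
  rw [e1, e2]

lemma dsum_zero_eq_sw (a b : ℤ) (hb : 0 < b) :
    dsum a b 0 0 = ∑ i ∈ Finset.range b.toNat, sw b i * sw b (a * (i:ℤ)) := by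
  have h := dsum_eq_sw a b 0 hb
  simpa using h

lemma floor_intdiv (b n : ℤ) (hb : 0 < b) : ⌊(n:ℝ)/(b:ℝ)⌋ = n / b := by
  have hbR : (0:ℝ) < (b:ℝ) := by exact_mod_cast hb
  rw [Int.floor_eq_iff]
  have h1 := Int.mul_ediv_add_emod n b
  have h2 := Int.emod_nonneg n (show b ≠ 0 by omega)
  have h3 := Int.emod_lt_of_pos n hb
  constructor
  · rw [le_div_iff₀ hbR]
    have : (n / b) * b ≤ n := by nlinarith
    exact_mod_cast this
  · rw [div_lt_iff₀ hbR]
    have : n < (n / b + 1) * b := by nlinarith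
    exact_mod_cast this

lemma ceil_cast (b p : ℤ) (hb : 0 < b) :
    ((⌈(p:ℚ)/(b:ℚ)⌉ : ℤ) : ℝ)
      = (p:ℝ)/(b:ℝ) - sw b p + 1/2 - (if b ∣ p then (1:ℝ)/2 else 0) := by
  have hbQ : (b:ℚ) ≠ 0 := by positivity
  have hbR : (b:ℝ) ≠ 0 := by positivity
  obtain ⟨q, r, hqr, hr0, hrb⟩ : ∃ q r, p = b * q + r ∧ 0 ≤ r ∧ r < b :=
    ⟨p / b, p % b, (Int.mul_ediv_add_emod p b).symm, Int.emod_nonneg p (by omega), Int.emod_lt_of_pos p hb⟩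
  have hqr' : p = r + b * q := by omega
  have hmod : p % b = r := by rw [hqr', Int.add_mul_emod_self_left, Int.emod_eq_of_lt hr0 hrb]
  have hQ : (p:ℚ)/(b:ℚ) = (r:ℚ)/(b:ℚ) + (q:ℤ) := by
    rw [hqr']; push_cast; field_simp
  rw [hQ, Int.ceil_add_intCast]
  rw [sw, sawq b p hb, hmod]
  by_cases h0 : r = 0
  · have hd : b ∣ p := Int.dvd_of_emod_eq_zero (by rw [hmod, h0])
    rw [if_pos hd, if_pos hd, h0]
    norm_num
    rw [hqr', h0]
    push_cast
    field_simp
    ring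
  · have hd : ¬ b ∣ p := by
      intro h
      have := Int.emod_eq_zero_of_dvd h
      omega
    rw [if_neg hd, if_neg hd]
    have hceil : ⌈(r:ℚ)/(b:ℚ)⌉ = 1 := by
      rw [Int.ceil_eq_iff]
      constructor
      · push_cast
        norm_num
        apply div_pos
        · exact_mod_cast lt_of_le_of_ne hr0 (Ne.symm h0)
        · exact_mod_cast hb
      · have hb' : (0:ℚ) < (b:ℚ) := by exact_mod_cast hb
        have hr' : (r:ℚ) ≤ (b:ℚ) := by exact_mod_cast le_of_lt hrb
        push_cast
        rw [div_le_one hb']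
        linarith
    rw [hceil]
    push_cast
    rw [hqr']
    push_cast
    field_simp
    ring

lemma count_dvd (b : ℤ) (hb : 2 ≤ b) (m : ℕ) :
    ∑ j ∈ Finset.range m, (if b ∣ (j:ℤ) then (1:ℝ) else 0)
      = ((⌊((m:ℝ) - 1)/(b:ℝ)⌋ : ℤ) : ℝ) + 1 := by
  have hb0 : (0:ℤ) < b := by omega
  induction m with
  | zero =>
    have h1 : ((0:ℝ) - 1) = (((-1:ℤ)):ℝ) := by norm_num
    simp only [Finset.range_zero, Finset.sum_empty, Nat.cast_zero, h1]
    rw [floor_intdiv b (-1) hb0]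
    have : (-1:ℤ) / b = -1 := by
      have := (Int.ediv_emod_unique hb0 (a := -1) (r := b - 1) (q := -1)).mpr
        ⟨by ring, by omega, by omega⟩
      exact this.1
    rw [this]
    norm_num
  | succ m ih =>
    rw [Finset.sum_range_succ, ih]
    set n : ℤ := (m:ℤ) - 1 with hn
    have hc1 : (((m:ℤ)):ℝ) = (((m+1:ℕ)):ℝ) - 1 := by push_cast; ring
    have hc2 : ((n:ℤ):ℝ) = ((m:ℕ):ℝ) - 1 := by rw [hn]; push_cast; ring
    rw [← hc1, ← hc2, floor_intdiv b (m:ℤ) hb0, floor_intdiv b n hb0, hn]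
    obtain ⟨q, r, hqr, hr0, hrb⟩ : ∃ q r, (m:ℤ) = b * q + r ∧ 0 ≤ r ∧ r < b :=
      ⟨(m:ℤ) / b, (m:ℤ) % b, (Int.mul_ediv_add_emod _ b).symm, Int.emod_nonneg _ (by omega),
        Int.emod_lt_of_pos _ hb0⟩
    have hdivm : (m:ℤ) / b = q := by
      exact ((Int.ediv_emod_unique hb0).mpr ⟨by linear_combination (-1:ℤ) * hqr, hr0, hrb⟩).1
    by_cases h0 : r = 0
    · have hd : b ∣ (m:ℤ) := ⟨q, by omega⟩
      have hdiv1 : ((m:ℤ) - 1) / b = q - 1 := by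
        exact ((Int.ediv_emod_unique hb0 (r := b - 1)).mpr
          ⟨by linear_combination (-1:ℤ) * hqr - h0, by omega, by omega⟩).1
      rw [if_pos hd, hdivm, hdiv1]
      push_cast
      ring
    · have hd : ¬ b ∣ (m:ℤ) := by
        intro h
        obtain ⟨k, hk⟩ := h
        have h5 : (m:ℤ) % b = r := ((Int.ediv_emod_unique hb0 (q := q)).mpr
          ⟨by linear_combination (-1:ℤ) * hqr, hr0, hrb⟩).2
        have h6 : (m:ℤ) % b = 0 := Int.emod_eq_zero_of_dvd ⟨k, hk⟩
        omega
      have hdiv1 : ((m:ℤ) - 1) / b = q := by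
        exact ((Int.ediv_emod_unique hb0 (r := r - 1)).mpr
          ⟨by linear_combination (-1:ℤ) * hqr, by omega, by omega⟩).1
      rw [if_neg hd, hdivm, hdiv1]
      push_cast
      ring

lemma sum_range_cast (m : ℕ) : ∑ j ∈ Finset.range m, (j:ℝ) = (m:ℝ)*((m:ℝ)-1)/2 := by
  induction m with
  | zero => simp
  | succ n ih => rw [Finset.sum_range_succ, ih]; push_cast; ring

theorem tau_compact_formula (ν : ℕ) (hν : 1 ≤ ν) (α ω : Fin ν → ℤ)
    (hω : ∀ l, 0 < ω l) (hωα : ∀ l, ω l < α l) (hcop : ∀ l, IsCoprime (α l) (ω l))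
    (e₀ : ℤ)
    (hhs : e₀ * (∏ l, α l) + ∑ l, ω l * ((∏ k, α k) / α l) = -1)
    (Δ : ℕ → ℤ)
    (hΔ : ∀ j : ℕ, Δ j = 1 - (j : ℤ) * e₀ - ∑ l, ⌈((j : ℚ) * (ω l : ℚ)) / (α l : ℚ)⌉)
    (τ : ℕ → ℤ) (hτ : ∀ m : ℕ, τ m = ∑ j ∈ Finset.range m, Δ j)
    (m : ℕ) (d : ℤ) (a : Fin ν → ℤ) (ha : ∀ l, 0 ≤ a l ∧ a l < α l)
    (hm : (m : ℤ) = d * (∏ l, α l) + ∑ l, a l * ((∏ k, α k) / α l)) :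
    (τ m : ℝ) =
      (∑ l, ((1/2) * ((⌊((m : ℝ) - 1) / (α l : ℝ)⌋ : ℤ) : ℝ)
          - dsum ((∏ k, α k) / α l) (α l) ((m : ℝ) / (α l : ℝ)) 0
          + dsum ((∏ k, α k) / α l) (α l) 0 0))
        + (m : ℝ) ^ 2 / (2 * ((∏ l, α l : ℤ) : ℝ))
        + (m : ℝ) * (1 - (ν : ℝ) / 2) - (d : ℝ) / 2 + (ν : ℝ) / 4
        + (1/4) * ∑ l, (if α l ∣ (m : ℤ) then (1 : ℝ) else 0) := by
  classical
  have hα2 : ∀ l, 2 ≤ α l := fun l => by have h1 := hω l; have h2 := hωα l; omega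
  set P : ℤ := ∏ l, α l with hP
  have hPpos : 0 < P := Finset.prod_pos fun l _ => by have := hα2 l; omega
  have hPR : (0:ℝ) < (P:ℝ) := by exact_mod_cast hPpos
  have hPR0 : (P:ℝ) ≠ 0 := ne_of_gt hPR
  have hαR : ∀ l, (α l : ℝ) ≠ 0 := fun l => by
    have := hα2 l; positivity
  have hPdvd : ∀ l, α l ∣ P := fun l => Finset.dvd_prod_of_mem α (Finset.mem_univ l)
  have hhat : ∀ l, α l * (P / α l) = P := fun l => Int.mul_ediv_cancel' (hPdvd l)
  have hhatdvd : ∀ l k, l ≠ k → α l ∣ P / α k := by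
    intro l k hlk
    have : P / α k = ∏ j ∈ Finset.univ.erase k, α j := by
      rw [hP, ← Finset.mul_prod_erase Finset.univ α (Finset.mem_univ k)]
      exact Int.mul_ediv_cancel_left _ (by have := hα2 k; omega)
    rw [this]
    exact Finset.dvd_prod_of_mem α (Finset.mem_erase.mpr ⟨hlk, Finset.mem_univ l⟩)
  have hkey0 : ∀ l, α l ∣ (P / α l) * ω l + 1 := by
    intro l
    have hsplit : ∑ k, ω k * (P / α k)
        = ω l * (P / α l) + ∑ k ∈ Finset.univ.erase l, ω k * (P / α k) :=
      (Finset.add_sum_erase Finset.univ (fun k => ω k * (P / α k)) (Finset.mem_univ l)).symm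
    have h1 : α l ∣ e₀ * P + ∑ k ∈ Finset.univ.erase l, ω k * (P / α k) :=
      dvd_add ((hPdvd l).mul_left e₀)
        (Finset.dvd_sum fun k hk =>
          ((hhatdvd l k (Finset.ne_of_mem_erase hk).symm).mul_left (ω k)))
    have h2 : (P / α l) * ω l + 1
        = -(e₀ * P + ∑ k ∈ Finset.univ.erase l, ω k * (P / α k)) := by
      linear_combination hhs - hsplit
    rw [h2]
    exact dvd_neg.mpr h1
  have hcong : ∀ l, α l ∣ ω l * (m:ℤ) + a l := by
    intro l
    have hsplit : ∑ k, a k * (P / α k)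
        = a l * (P / α l) + ∑ k ∈ Finset.univ.erase l, a k * (P / α k) :=
      (Finset.add_sum_erase Finset.univ (fun k => a k * (P / α k)) (Finset.mem_univ l)).symm
    have h1 : α l ∣ ω l * d * P := (hPdvd l).mul_left _
    have h2 : α l ∣ ω l * ∑ k ∈ Finset.univ.erase l, a k * (P / α k) :=
      ((Finset.dvd_sum fun k hk =>
        ((hhatdvd l k (Finset.ne_of_mem_erase hk).symm).mul_left (a k))).mul_left (ω l))
    have h3 : α l ∣ a l * ((P / α l) * ω l + 1) := (hkey0 l).mul_left (a l)
    have he : ω l * (m:ℤ) + a l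
        = ω l * d * P + ω l * (∑ k ∈ Finset.univ.erase l, a k * (P / α k))
          + a l * ((P / α l) * ω l + 1) := by
      rw [hm, hsplit]; ring
    rw [he]
    exact dvd_add (dvd_add h1 h2) h3
  -- χ notation
  set χ : Fin ν → ℝ := fun l => if α l ∣ (m:ℤ) then (1:ℝ) else 0 with hχ
  -- the key Dedekind-sum identity per l
  have hKeyD : ∀ l, -(dsum (P / α l) (α l) ((m:ℝ)/(α l:ℝ)) 0) + dsum (P / α l) (α l) 0 0
      = (∑ j ∈ Finset.range m, sw (α l) (ω l * (j:ℤ))) + (1/2) * sw (α l) (ω l * (m:ℤ)) := by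
    intro l
    have hb0 : (0:ℤ) < α l := by have := hα2 l; omega
    have hx : ((m:ℕ):ℝ) = (((m:ℕ):ℤ):ℝ) := by push_cast; ring
    have hdv : α l ∣ (P / α l) * ω l + 1 := hkey0 l
    have hk := key_sum (α l) (P / α l) (ω l) (hα2 l) hdv m
    rw [hx, dsum_eq_sw (P / α l) (α l) (m:ℤ) hb0, dsum_zero_eq_sw (P / α l) (α l) hb0]
    linarith [hk]
  -- homology condition over ℝ
  have hAcast : ∀ l, ((P / α l : ℤ):ℝ) = (P:ℝ)/(α l:ℝ) := by
    intro l
    rw [eq_div_iff (hαR l)]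
    have := congrArg (fun z : ℤ => (z:ℝ)) (hhat l)
    push_cast at this
    linarith [this]
  have hE : (e₀:ℝ) + ∑ l, (ω l:ℝ)/(α l:ℝ) = -(1/(P:ℝ)) := by
    have hc := congrArg (fun z : ℤ => (z:ℝ)) hhs
    push_cast at hc
    have hc2 : (e₀:ℝ) * (P:ℝ) + ∑ l, (ω l:ℝ) * ((P:ℝ)/(α l:ℝ)) = -1 := by
      have hsum : ∑ l, (ω l:ℝ) * ((P:ℝ)/(α l:ℝ)) = ∑ l, (ω l:ℝ) * ((P / α l : ℤ):ℝ) :=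
        Finset.sum_congr rfl fun l _ => by rw [hAcast l]
      rw [hsum]
      exact hc
    have hc3 : ∑ l, (ω l:ℝ) * ((P:ℝ)/(α l:ℝ)) = (P:ℝ) * ∑ l, (ω l:ℝ)/(α l:ℝ) := by
      rw [Finset.mul_sum]
      exact Finset.sum_congr rfl fun l _ => by ring
    rw [hc3] at hc2
    field_simp
    linear_combination hc2
  -- cast of Δ
  have hΔR : ∀ j : ℕ, ((Δ j : ℤ):ℝ)
      = (1 - (ν:ℝ)/2) + (j:ℝ)/(P:ℝ) + (∑ l, sw (α l) (ω l * (j:ℤ)))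
        + (1/2) * (∑ l, if α l ∣ (j:ℤ) then (1:ℝ) else 0) := by
    intro j
    have h1 := congrArg (fun z : ℤ => (z:ℝ)) (hΔ j)
    push_cast at h1
    rw [h1]
    have h2 : ∀ l : Fin ν, ((⌈((j:ℚ) * (ω l:ℚ))/(α l:ℚ)⌉ : ℤ):ℝ)
        = (j:ℝ) * ((ω l:ℝ)/(α l:ℝ)) - sw (α l) (ω l * (j:ℤ)) + 1/2
          - (if α l ∣ (j:ℤ) then (1:ℝ) else 0)/2 := by
      intro l
      have hb0 : (0:ℤ) < α l := by have := hα2 l; omega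
      have e : ((j:ℚ) * (ω l:ℚ)) = (((ω l * (j:ℤ) : ℤ)):ℚ) := by push_cast; ring
      rw [e, ceil_cast (α l) (ω l * (j:ℤ)) hb0]
      have hiff : (α l ∣ ω l * (j:ℤ)) ↔ (α l ∣ (j:ℤ)) :=
        ⟨fun h => (hcop l).dvd_of_dvd_mul_left h, fun h => h.mul_left _⟩
      rw [if_congr hiff rfl rfl]
      push_cast
      split_ifs <;> (field_simp [hαR l]; try ring)
    rw [Finset.sum_congr rfl fun l _ => h2 l]
    rw [Finset.sum_sub_distrib, Finset.sum_add_distrib, Finset.sum_sub_distrib,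
      ← Finset.mul_sum, Finset.sum_const, Finset.card_univ, Fintype.card_fin,
      nsmul_eq_mul]
    have hsum2 : ∑ l, (if α l ∣ (j:ℤ) then (1:ℝ) else 0)/2
        = (∑ l, if α l ∣ (j:ℤ) then (1:ℝ) else 0)/2 := by
      rw [Finset.sum_div]
    rw [hsum2]
    linear_combination (-(j:ℝ)) * hE
  -- sum over j
  have hτR : (τ m : ℝ)
      = (m:ℝ) * (1 - (ν:ℝ)/2) + ((m:ℝ)*((m:ℝ)-1)/2)/(P:ℝ)
        + (∑ l, ∑ j ∈ Finset.range m, sw (α l) (ω l * (j:ℤ)))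
        + (1/2) * (∑ l, ∑ j ∈ Finset.range m, if α l ∣ (j:ℤ) then (1:ℝ) else 0) := by
    have h0 : (τ m : ℝ) = ∑ j ∈ Finset.range m, ((Δ j : ℤ):ℝ) := by
      rw [hτ m]; push_cast; ring
    rw [h0, Finset.sum_congr rfl fun j _ => hΔR j]
    rw [Finset.sum_add_distrib, Finset.sum_add_distrib, Finset.sum_add_distrib,
      Finset.sum_const, Finset.card_range, nsmul_eq_mul, ← Finset.sum_div,
      sum_range_cast m, ← Finset.mul_sum, Finset.sum_comm, Finset.sum_comm (s := Finset.range m)]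
    try ring
  -- count lemma per l
  have hcount : ∀ l : Fin ν, ∑ j ∈ Finset.range m, (if α l ∣ (j:ℤ) then (1:ℝ) else 0)
      = ((⌊((m:ℝ) - 1)/(α l:ℝ)⌋ : ℤ) : ℝ) + 1 := fun l => count_dvd (α l) (hα2 l) m
  -- a l identity
  have hal : ∀ l : Fin ν, (a l : ℝ)
      = (α l:ℝ) * (-(sw (α l) (ω l * (m:ℤ))) + 1/2 - (χ l)/2) := by
    intro l
    have hb0 : (0:ℤ) < α l := by have := hα2 l; omega
    have hbR := hαR l
    by_cases hdm : α l ∣ (m:ℤ)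
    · have hda : α l ∣ a l := by
        have h1 : α l ∣ ω l * (m:ℤ) := hdm.mul_left _
        have := (hcong l).sub h1
        simpa using this
      have ha0 : a l = 0 := by
        have hb := ha l
        exact Int.eq_zero_of_abs_lt_dvd hda (by rw [abs_lt]; omega)
      have hsw : sw (α l) (ω l * (m:ℤ)) = 0 := by
        rw [sw, sawq (α l) _ hb0, if_pos (hdm.mul_left _)]
      rw [ha0, hsw, hχ]
      simp [hdm]
    · have hndvd : ¬ α l ∣ ω l * (m:ℤ) := fun h => hdm ((hcop l).dvd_of_dvd_mul_left h)
      obtain ⟨r, hr⟩ : ∃ r, r = (ω l * (m:ℤ)) % (α l) := ⟨_, rfl⟩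
      have hr0 : 0 ≤ r := hr ▸ Int.emod_nonneg _ (by omega)
      have hrb : r < α l := hr ▸ Int.emod_lt_of_pos _ hb0
      have hrne : r ≠ 0 := fun h => hndvd (Int.dvd_of_emod_eq_zero (by rw [← hr]; exact h))
      have hsw : sw (α l) (ω l * (m:ℤ)) = (r:ℝ)/(α l:ℝ) - 1/2 := by
        rw [sw, sawq (α l) _ hb0, if_neg hndvd, ← hr]
      have hra : α l ∣ r + a l := by
        have h1 : α l ∣ (α l) * ((ω l * (m:ℤ)) / α l) := Dvd.intro _ rfl
        have h2 := Int.mul_ediv_add_emod (ω l * (m:ℤ)) (α l)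
        have h3 := (hcong l).sub h1
        have he : ω l * (m:ℤ) + a l - α l * ((ω l * (m:ℤ)) / α l) = r + a l := by
          rw [hr]; linear_combination -h2
        rwa [he] at h3
      obtain ⟨k, hk⟩ := hra
      have hb := ha l
      have hrpos : 0 < r := lt_of_le_of_ne hr0 (Ne.symm hrne)
      have hk1 : k = 1 := by
        have hpos : 0 < α l * k := by omega
        have h1 : 1 ≤ k := by
          by_contra hc
          push_neg at hc
          have : α l * k ≤ 0 := mul_nonpos_of_nonneg_of_nonpos (by omega) (by omega)
          omega
        have h2 : k ≤ 1 := by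
          by_contra hc
          push_neg at hc
          have : α l * 2 ≤ α l * k := mul_le_mul_of_nonneg_left (by omega) (by omega)
          omega
        omega
      have hav : a l = α l - r := by
        rw [hk1, mul_one] at hk
        omega
      rw [hav, hsw, hχ]
      simp only [hdm, if_false]
      push_cast
      field_simp
      ring
  -- d identity
  have hdid : (d:ℝ) = (m:ℝ)/(P:ℝ) + (∑ l, sw (α l) (ω l * (m:ℤ))) - (ν:ℝ)/2
      + (1/2) * (∑ l, χ l) := by
    have hc := congrArg (fun z : ℤ => (z:ℝ)) hm
    push_cast at hc
    have hc2 : (m:ℝ) = (d:ℝ) * (P:ℝ) + ∑ l, (a l:ℝ) * ((P:ℝ)/(α l:ℝ)) := by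
      have hsum : ∑ l, (a l:ℝ) * ((P:ℝ)/(α l:ℝ)) = ∑ l, (a l:ℝ) * ((P / α l : ℤ):ℝ) :=
        Finset.sum_congr rfl fun l _ => by rw [hAcast l]
      rw [hsum]
      exact hc
    have hc3 : ∑ l, (a l:ℝ) * ((P:ℝ)/(α l:ℝ))
        = (P:ℝ) * ((-(∑ l, sw (α l) (ω l * (m:ℤ)))) + (ν:ℝ)/2 - (∑ l, χ l)/2) := by
      have hper : ∀ l : Fin ν, (a l:ℝ) * ((P:ℝ)/(α l:ℝ))
          = (P:ℝ) * (-(sw (α l) (ω l * (m:ℤ))) + 1/2 - (χ l)/2) := by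
        intro l
        rw [hal l]
        field_simp [hαR l]
      rw [Finset.sum_congr rfl fun l _ => hper l, ← Finset.mul_sum]
      congr 1
      rw [Finset.sum_sub_distrib, Finset.sum_add_distrib, Finset.sum_const,
        Finset.card_univ, Fintype.card_fin, nsmul_eq_mul, ← Finset.sum_neg_distrib,
        Finset.sum_div]
      ring
    rw [hc3] at hc2
    field_simp
    linear_combination (-2:ℝ) * hc2
  -- final assembly
  have hgoalsum : ∑ l, ((1/2) * ((⌊((m : ℝ) - 1) / (α l : ℝ)⌋ : ℤ) : ℝ)
          - dsum (P / α l) (α l) ((m : ℝ) / (α l : ℝ)) 0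
          + dsum (P / α l) (α l) 0 0)
      = (1/2) * (∑ l, ((⌊((m : ℝ) - 1) / (α l : ℝ)⌋ : ℤ) : ℝ))
        + (∑ l, ∑ j ∈ Finset.range m, sw (α l) (ω l * (j:ℤ)))
        + (1/2) * (∑ l, sw (α l) (ω l * (m:ℤ))) := by
    have hper : ∀ l : Fin ν, (1/2) * ((⌊((m : ℝ) - 1) / (α l : ℝ)⌋ : ℤ) : ℝ)
          - dsum (P / α l) (α l) ((m : ℝ) / (α l : ℝ)) 0
          + dsum (P / α l) (α l) 0 0
        = (1/2) * ((⌊((m : ℝ) - 1) / (α l : ℝ)⌋ : ℤ) : ℝ)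
          + (∑ j ∈ Finset.range m, sw (α l) (ω l * (j:ℤ)))
          + (1/2) * sw (α l) (ω l * (m:ℤ)) := by
      intro l
      have := hKeyD l
      linarith [this]
    rw [Finset.sum_congr rfl fun l _ => hper l, Finset.sum_add_distrib,
      Finset.sum_add_distrib, ← Finset.mul_sum, ← Finset.mul_sum]
  rw [hgoalsum, hτR]
  have hcount2 : ∑ l, ∑ j ∈ Finset.range m, (if α l ∣ (j:ℤ) then (1:ℝ) else 0)
      = (∑ l, ((⌊((m:ℝ) - 1)/(α l:ℝ)⌋ : ℤ) : ℝ)) + (ν:ℝ) := by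
    rw [Finset.sum_congr rfl fun l _ => hcount l, Finset.sum_add_distrib,
      Finset.sum_const, Finset.card_univ, Fintype.card_fin, nsmul_eq_mul, mul_one]
  rw [hcount2]
  rw [hdid]
  field_simp
  ring
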